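/- arXiv:2410.16036 — 3 statements merged into one kernel-verified Lean document; each statement's English description precedes it below -/
import Mathlib

section
/- Let B > 0 and p ∈ ℝ. Let v : ℝ → ℝ be locally integrable and suppose there exist a measurable, nonnegative, square-integrable function v₂ : ℝ → ℝ and a constant M ≥ 0 such that v(x) ≥ −v₂(x) − M for almost every x ∈ ℝ. Then for every δ > 0 the window integral ∫_a^{a+δ} ((p + Bx)² + v(x)) dx tends to +∞ as a → +∞, and also tends to +∞ as a → −∞. -/
open MeasureTheory Filter

lemma molchanov_window_lower_bound
    (B p δ : ℝ) (hδ : 0 < δ) (v v₂ : ℝ → ℝ)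
    (hv : LocallyIntegrable v volume)
    (hv₂meas : Measurable v₂) (hv₂nonneg : ∀ x, 0 ≤ v₂ x)
    (hv₂L2 : Integrable (fun x => (v₂ x) ^ 2))
    (M : ℝ)
    (hlb : ∀ᵐ x : ℝ, v x ≥ -v₂ x - M)
    (a c : ℝ) (hc : ∀ x ∈ Set.Ioc a (a + δ), c ≤ (p + B * x) ^ 2) :
    δ * c - ((∫ x, (v₂ x) ^ 2) + δ + δ * M)
      ≤ ∫ x in Set.Ioc a (a + δ), ((p + B * x) ^ 2 + v x) := by
  set I : Set ℝ := Set.Ioc a (a + δ) with hI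
  have hIvol : volume I = ENNReal.ofReal δ := by
    rw [hI, Real.volume_Ioc]; ring_nf
  have hIfin : volume I < ⊤ := by rw [hIvol]; exact ENNReal.ofReal_lt_top
  have hItop : (volume I).toReal = δ := by rw [hIvol, ENNReal.toReal_ofReal hδ.le]
  have hIm : MeasurableSet I := measurableSet_Ioc
  have hq : IntegrableOn (fun x => (p + B * x) ^ 2) I := by
    apply Continuous.integrableOn_Ioc
    continuity
  have hvI : IntegrableOn v I :=
    (hv.integrableOn_isCompact isCompact_Icc).mono_set Set.Ioc_subset_Icc_self
  have hconstI : ∀ r : ℝ, IntegrableOn (fun _ => r) I := fun r =>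
    integrableOn_const hIfin.ne
  have hsqI : IntegrableOn (fun x => (v₂ x) ^ 2 + 1) I :=
    hv₂L2.integrableOn.add (hconstI 1)
  have hv₂I : IntegrableOn v₂ I := by
    refine hsqI.mono' hv₂meas.aestronglyMeasurable.restrict ?_
    filter_upwards with x
    rw [Real.norm_eq_abs, abs_of_nonneg (hv₂nonneg x)]
    nlinarith [sq_nonneg (v₂ x - 1), hv₂nonneg x]
  have hlbI : IntegrableOn (fun x => -v₂ x - M) I := hv₂I.neg.sub (hconstI M)
  have h1 : ∫ x in I, ((p + B * x) ^ 2 + v x)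
      = (∫ x in I, (p + B * x) ^ 2) + ∫ x in I, v x := integral_add hq hvI
  have h2 : δ * c ≤ ∫ x in I, (p + B * x) ^ 2 := by
    have := setIntegral_mono_on (hconstI c) hq hIm hc
    rwa [setIntegral_const, measureReal_def, hItop, smul_eq_mul] at this
  have h3 : (-(∫ x in I, v₂ x)) - δ * M ≤ ∫ x in I, v x := by
    have hmono : ∫ x in I, (-v₂ x - M) ≤ ∫ x in I, v x :=
      integral_mono_ae hlbI hvI
        (ae_restrict_of_ae (hlb.mono fun x hx => hx))
    have hfun : (fun x => -v₂ x - M) = fun x => -(v₂ x + M) := by funext x; ring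
    rw [hfun, integral_neg, integral_add hv₂I (hconstI M), setIntegral_const, measureReal_def, hItop,
      smul_eq_mul] at hmono
    linarith
  have h4 : ∫ x in I, v₂ x ≤ (∫ x, (v₂ x) ^ 2) + δ := by
    have hle : ∫ x in I, v₂ x ≤ ∫ x in I, ((v₂ x) ^ 2 + 1) :=
      setIntegral_mono_on hv₂I hsqI hIm (fun x _ => by nlinarith [sq_nonneg (v₂ x - 1)])
    have h5 : ∫ x in I, ((v₂ x) ^ 2 + 1) = (∫ x in I, (v₂ x) ^ 2) + δ := by
      rw [integral_add hv₂L2.integrableOn (hconstI 1), setIntegral_const, measureReal_def, hItop,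
        smul_eq_mul, mul_one]
    have h6 : ∫ x in I, (v₂ x) ^ 2 ≤ ∫ x, (v₂ x) ^ 2 :=
      setIntegral_le_integral hv₂L2 (ae_of_all _ fun x => sq_nonneg _)
    linarith
  rw [h1]
  linarith

/-- Molchanov criterion for the fiber operator: with `B > 0`,
`v` locally integrable and bounded below by `−v₂ − M` a.e. with `v₂ ≥ 0`
square-integrable and `M ≥ 0`, for every `δ > 0` the window integral
`∫_a^{a+δ} ((p+Bx)² + v(x)) dx` tends to `+∞` as `a → +∞` and as `a → −∞`. -/
theorem molchanov_window_tendsto_atTop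
    (B p : ℝ) (hB : 0 < B) (v v₂ : ℝ → ℝ)
    (hv : LocallyIntegrable v volume)
    (hv₂meas : Measurable v₂) (hv₂nonneg : ∀ x, 0 ≤ v₂ x)
    (hv₂L2 : Integrable (fun x => (v₂ x) ^ 2))
    (M : ℝ) (hM : 0 ≤ M)
    (hlb : ∀ᵐ x : ℝ, v x ≥ -v₂ x - M) :
    ∀ δ : ℝ, 0 < δ →
      Tendsto (fun a : ℝ => ∫ x in Set.Ioc a (a + δ), ((p + B * x) ^ 2 + v x))
        atTop atTop ∧
      Tendsto (fun a : ℝ => ∫ x in Set.Ioc a (a + δ), ((p + B * x) ^ 2 + v x))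
        atBot atTop := by
  intro δ hδ
  set K : ℝ := (∫ x, (v₂ x) ^ 2) + δ + δ * M with hK
  have hBa : Tendsto (fun a : ℝ => p + B * a) atTop atTop :=
    tendsto_atTop_add_const_left _ p (tendsto_id.const_mul_atTop hB)
  constructor
  · -- a → +∞
    have hsq : Tendsto (fun a : ℝ => (p + B * a) ^ 2) atTop atTop :=
      (tendsto_pow_atTop two_ne_zero).comp hBa
    have hg : Tendsto (fun a : ℝ => δ * (p + B * a) ^ 2 - K) atTop atTop := by
      simpa [sub_eq_add_neg] using
        tendsto_atTop_add_const_right _ (-K) (hsq.const_mul_atTop hδ)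
    refine tendsto_atTop_mono' _ ?_ hg
    filter_upwards [hBa.eventually_ge_atTop 0] with a ha
    refine molchanov_window_lower_bound B p δ hδ v v₂ hv hv₂meas hv₂nonneg hv₂L2 M hlb a _
      (fun x hx => ?_)
    have hx1 : p + B * a ≤ p + B * x :=
      add_le_add_right (mul_le_mul_of_nonneg_left hx.1.le hB.le) p
    exact pow_le_pow_left₀ ha hx1 2
  · -- a → -∞
    have hBb : Tendsto (fun a : ℝ => p + B * (a + δ)) atBot atBot := by
      apply tendsto_atBot_add_const_left _ p
      exact (tendsto_atBot_add_const_right _ δ tendsto_id).const_mul_atBot hB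
    have hsq : Tendsto (fun a : ℝ => (p + B * (a + δ)) ^ 2) atBot atTop := by
      have habs : Tendsto (fun a : ℝ => |p + B * (a + δ)|) atBot atTop :=
        tendsto_abs_atBot_atTop.comp hBb
      have := (tendsto_pow_atTop two_ne_zero).comp habs
      exact this.congr fun a => by simp [Function.comp, sq_abs]
    have hg : Tendsto (fun a : ℝ => δ * (p + B * (a + δ)) ^ 2 - K) atBot atTop := by
      simpa [sub_eq_add_neg] using
        tendsto_atTop_add_const_right _ (-K) (hsq.const_mul_atTop hδ)
    refine tendsto_atTop_mono' _ ?_ hg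
    filter_upwards [hBb.eventually_le_atBot 0] with a ha
    refine molchanov_window_lower_bound B p δ hδ v v₂ hv hv₂meas hv₂nonneg hv₂L2 M hlb a _
      (fun x hx => ?_)
    have hx2 : p + B * x ≤ p + B * (a + δ) :=
      add_le_add_right (mul_le_mul_of_nonneg_left hx.2 hB.le) p
    nlinarith [hx2, ha]
end

section
/- Let n ∈ ℕ and set g(x) = (H_n(x))² · e^{−x²}, where H_n is the probabilists' Hermite polynomial. Then the zero set {ξ ∈ ℝ : 𝓕g(ξ) = 0} of the Fourier transform of g has no accumulation point in ℝ; in particular all zeros of 𝓕g are isolated and the zero set has Lebesgue measure zero. -/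
open MeasureTheory Polynomial

open scoped FourierTransform

open scoped Real

/-- Polynomial times Gaussian is integrable. -/
lemma integrable_poly_gaussian (Q : Polynomial ℝ) {b : ℝ} (hb : 0 < b) :
    Integrable (fun x : ℝ => aeval x Q * Real.exp (-b * x ^ 2)) := by
  induction Q using Polynomial.induction_on' with
  | add p q hp hq =>
      simpa [add_mul, Pi.add_def] using hp.add hq
  | monomial k c =>
      have h := integrable_rpow_mul_exp_neg_mul_sq hb (s := (k : ℝ)) (lt_of_lt_of_le neg_one_lt_zero (Nat.cast_nonneg k))
      have : Integrable (fun x : ℝ => x ^ k * Real.exp (-b * x ^ 2)) := by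
        simpa [Real.rpow_natCast] using h
      simpa [aeval_monomial, mul_assoc] using this.const_mul c

/-- abs version -/
lemma integrable_abs_poly_gaussian (Q : Polynomial ℝ) {b : ℝ} (hb : 0 < b) :
    Integrable (fun x : ℝ => |aeval x Q| * Real.exp (-b * x ^ 2)) := by
  have := (integrable_poly_gaussian Q hb).abs
  refine this.congr ?_
  filter_upwards with x
  rw [abs_mul, abs_of_pos (Real.exp_pos _)]

/-- Polynomial times gaussian times exp of linear term is integrable. -/
lemma integrable_abs_poly_gaussian_exp (Q : Polynomial ℝ) (c : ℝ) :
    Integrable (fun x : ℝ =>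
      |aeval x Q| * Real.exp (-x ^ 2) * Real.exp (c * |x|)) := by
  have hI := (integrable_abs_poly_gaussian Q (b := 1/2) (by norm_num)).const_mul
    (Real.exp (c ^ 2 / 2))
  refine hI.mono' ?_ ?_
  · apply Continuous.aestronglyMeasurable
    exact (((Q.continuous_aeval).abs.mul (by continuity)).mul (by continuity))
  · filter_upwards with x
    have h1 : c * |x| ≤ c ^ 2 / 2 + x ^ 2 / 2 := by
      nlinarith [sq_nonneg (c - |x|), sq_abs x]
    have h2 : Real.exp (-x ^ 2) * Real.exp (c * |x|)
        ≤ Real.exp (c ^ 2 / 2) * Real.exp (-(1/2) * x ^ 2) := by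
      rw [← Real.exp_add, ← Real.exp_add]
      apply Real.exp_le_exp.2
      nlinarith
    have h3 : (0:ℝ) ≤ |aeval x Q| := abs_nonneg _
    rw [Real.norm_eq_abs, abs_of_nonneg (by positivity)]
    calc |aeval x Q| * Real.exp (-x ^ 2) * Real.exp (c * |x|)
        = |aeval x Q| * (Real.exp (-x ^ 2) * Real.exp (c * |x|)) := by ring
      _ ≤ |aeval x Q| * (Real.exp (c ^ 2 / 2) * Real.exp (-(1/2) * x ^ 2)) := by
          exact mul_le_mul_of_nonneg_left h2 h3
      _ = Real.exp (c ^ 2 / 2) * (|aeval x Q| * Real.exp (-(1/2) * x ^ 2)) := by ring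

/-- The complex-analytic extension of the Fourier transform of `P(x) e^{-x²}`. -/
noncomputable def gaussFT (P : Polynomial ℝ) (z : ℂ) : ℂ :=
  ∫ x : ℝ, Complex.exp ((↑(-2 * π * x) : ℂ) * z * Complex.I) *
    ((aeval x P * Real.exp (-x ^ 2) : ℝ) : ℂ)

lemma norm_gaussFT_integrand (r s : ℝ) (z : ℂ) :
    ‖Complex.exp ((r : ℂ) * z * Complex.I) * ((s : ℝ) : ℂ)‖
      = Real.exp (-(r * z.im)) * |s| := by
  rw [norm_mul, Complex.norm_exp,
    Complex.norm_real, Real.norm_eq_abs]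
  congr 2
  simp [Complex.mul_re]

lemma continuous_gaussFT_integrand (P : Polynomial ℝ) (z : ℂ) :
    Continuous fun x : ℝ => Complex.exp ((↑(-2 * π * x) : ℂ) * z * Complex.I) *
      ((aeval x P * Real.exp (-x ^ 2) : ℝ) : ℂ) := by
  apply Continuous.mul
  · exact Complex.continuous_exp.comp
      (((Complex.continuous_ofReal.comp (by continuity)).mul continuous_const).mul
        continuous_const)
  · exact Complex.continuous_ofReal.comp ((P.continuous_aeval).mul (by continuity))

lemma gaussFT_integrable (P : Polynomial ℝ) (z : ℂ) :
    Integrable (fun x : ℝ => Complex.exp ((↑(-2 * π * x) : ℂ) * z * Complex.I) *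
      ((aeval x P * Real.exp (-x ^ 2) : ℝ) : ℂ)) := by
  refine (integrable_abs_poly_gaussian_exp P (2 * π * |z.im|)).mono'
    (continuous_gaussFT_integrand P z).aestronglyMeasurable ?_
  filter_upwards with x
  rw [norm_gaussFT_integrand]
  have h1 : |aeval x P * Real.exp (-x ^ 2)| = |aeval x P| * Real.exp (-x ^ 2) := by
    rw [abs_mul, abs_of_pos (Real.exp_pos _)]
  rw [h1]
  have h2 : -(-2 * π * x * z.im) ≤ 2 * π * |z.im| * |x| := by
    have : (2 * π * x) * z.im ≤ |2 * π * x * z.im| := le_abs_self _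
    calc -(-2 * π * x * z.im) = (2 * π * x) * z.im := by ring
      _ ≤ |2 * π * x * z.im| := this
      _ = 2 * π * |z.im| * |x| := by
          rw [abs_mul, abs_mul, abs_of_pos Real.two_pi_pos]; ring
  calc Real.exp (-(-2 * π * x * z.im)) * (|aeval x P| * Real.exp (-x ^ 2))
      ≤ Real.exp (2 * π * |z.im| * |x|) * (|aeval x P| * Real.exp (-x ^ 2)) := by
        exact mul_le_mul_of_nonneg_right (Real.exp_le_exp.2 h2) (by positivity)
    _ = |aeval x P| * Real.exp (-x ^ 2) * Real.exp (2 * π * |z.im| * |x|) := by ring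

lemma gaussFT_differentiable (P : Polynomial ℝ) : Differentiable ℂ (gaussFT P) := by
  intro z₀
  set R : ℝ := |z₀.im| + 1 with hR
  have hbound_int : Integrable (fun x : ℝ =>
      (2 * π) * (|aeval x (X * P)| * Real.exp (-x ^ 2) *
        Real.exp ((2 * π * R) * |x|))) :=
    (integrable_abs_poly_gaussian_exp (X * P) (2 * π * R)).const_mul _
  have key := hasDerivAt_integral_of_dominated_loc_of_deriv_le (μ := volume)
    (F := fun (z : ℂ) (x : ℝ) =>
      Complex.exp ((↑(-2 * π * x) : ℂ) * z * Complex.I) *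
        ((aeval x P * Real.exp (-x ^ 2) : ℝ) : ℂ))
    (F' := fun (z : ℂ) (x : ℝ) =>
      ((↑(-2 * π * x) : ℂ) * Complex.I) *
        (Complex.exp ((↑(-2 * π * x) : ℂ) * z * Complex.I) *
          ((aeval x P * Real.exp (-x ^ 2) : ℝ) : ℂ)))
    (x₀ := z₀) (s := Metric.ball z₀ 1)
    (bound := fun x : ℝ => (2 * π) * (|aeval x (X * P)| * Real.exp (-x ^ 2) *
        Real.exp ((2 * π * R) * |x|)))
    (Metric.ball_mem_nhds z₀ one_pos)
    (Filter.Eventually.of_forall fun z =>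
      (continuous_gaussFT_integrand P z).aestronglyMeasurable)
    (gaussFT_integrable P z₀)
    (by
      apply Continuous.aestronglyMeasurable
      exact ((Complex.continuous_ofReal.comp (by continuity)).mul
        continuous_const).mul (continuous_gaussFT_integrand P z₀))
    (by
      filter_upwards with x z hz
      rw [norm_mul, norm_gaussFT_integrand]
      have h1 : ‖(↑(-2 * π * x) : ℂ) * Complex.I‖ = 2 * π * |x| := by
        rw [norm_mul, Complex.norm_I, mul_one,
          Complex.norm_real, Real.norm_eq_abs, abs_mul, abs_mul,
          abs_neg, abs_two, abs_of_pos Real.pi_pos]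
      have h2 : |aeval x P * Real.exp (-x ^ 2)|
          = |aeval x P| * Real.exp (-x ^ 2) := by
        rw [abs_mul, abs_of_pos (Real.exp_pos _)]
      rw [h1, h2]
      have him : |z.im| ≤ R := by
        have h3 : |z.im - z₀.im| ≤ ‖z - z₀‖ := by
          simpa using Complex.abs_im_le_norm (z - z₀)
        have h4 : ‖z - z₀‖ < 1 := by
          simpa [dist_eq_norm] using Metric.mem_ball.1 hz
        calc |z.im| ≤ |z.im - z₀.im| + |z₀.im| := by
              simpa using abs_add_le (z.im - z₀.im) z₀.im
          _ ≤ R := by rw [hR]; linarith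
      have h5 : -(-2 * π * x * z.im) ≤ (2 * π * R) * |x| := by
        calc -(-2 * π * x * z.im) = (2 * π * x) * z.im := by ring
          _ ≤ |2 * π * x * z.im| := le_abs_self _
          _ = (2 * π * |x|) * |z.im| := by
              rw [abs_mul, abs_mul, abs_mul, abs_two, abs_of_pos Real.pi_pos]
          _ ≤ (2 * π * |x|) * R := by
              exact mul_le_mul_of_nonneg_left him (by positivity)
          _ = (2 * π * R) * |x| := by ring
      have h6 : |aeval x (X * P)| = |x| * |aeval x P| := by
        rw [map_mul, aeval_X, abs_mul]
      rw [h6]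
      calc 2 * π * |x| * (Real.exp (-(-2 * π * x * z.im)) *
            (|aeval x P| * Real.exp (-x ^ 2)))
          ≤ 2 * π * |x| * (Real.exp ((2 * π * R) * |x|) *
            (|aeval x P| * Real.exp (-x ^ 2))) := by
            refine mul_le_mul_of_nonneg_left ?_ (by positivity)
            exact mul_le_mul_of_nonneg_right (Real.exp_le_exp.2 h5) (by positivity)
        _ = 2 * π * (|x| * |aeval x P| * Real.exp (-x ^ 2) *
            Real.exp ((2 * π * R) * |x|)) := by ring)
    hbound_int
    (by
      filter_upwards with x z _
      have hd : HasDerivAt (fun w : ℂ => (↑(-2 * π * x) : ℂ) * w * Complex.I)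
          ((↑(-2 * π * x) : ℂ) * Complex.I) z := by
        simpa using (((hasDerivAt_id z).const_mul ((↑(-2 * π * x) : ℂ))).mul_const
          Complex.I)
      have := (hd.cexp).mul_const ((aeval x P * Real.exp (-x ^ 2) : ℝ) : ℂ)
      convert this using 1
      · rfl
      ring)
  exact ⟨_, key.2⟩

lemma gaussFT_analytic (P : Polynomial ℝ) :
    AnalyticOnNhd ℂ (gaussFT P) Set.univ :=
  (gaussFT_differentiable P).differentiableOn.analyticOnNhd isOpen_univ

lemma gaussFT_zero_ne (n : ℕ) :
    gaussFT ((hermite n ^ 2).map (algebraMap ℤ ℝ)) 0 ≠ 0 := by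
  set P : Polynomial ℝ := (hermite n ^ 2).map (algebraMap ℤ ℝ) with hP
  have hre : gaussFT P 0 = ((∫ x : ℝ, aeval x P * Real.exp (-x ^ 2)) : ℝ) := by
    rw [gaussFT]
    simp only [mul_zero, zero_mul, Complex.exp_zero, one_mul]
    exact integral_ofReal
  have hint : Integrable (fun x : ℝ => aeval x P * Real.exp (-x ^ 2)) := by
    have := integrable_poly_gaussian P one_pos
    simpa using this
  have hnonneg : ∀ x : ℝ, 0 ≤ aeval x P * Real.exp (-x ^ 2) := by
    intro x
    have : aeval x P = (aeval x (hermite n)) ^ 2 := by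
      rw [hP, aeval_map_algebraMap, map_pow]
    rw [this]
    positivity
  have hpos : 0 < ∫ x : ℝ, aeval x P * Real.exp (-x ^ 2) := by
    rw [integral_pos_iff_support_of_nonneg hnonneg hint]
    have hPne : P ≠ 0 := by
      rw [hP, Ne, Polynomial.map_eq_zero_iff (algebraMap ℤ ℝ).injective_int]
      exact ((hermite_monic n).pow 2).ne_zero
    have hfin : {x : ℝ | aeval x P = 0}.Finite := by
      have := Polynomial.finite_setOf_isRoot hPne
      simpa [Polynomial.IsRoot, ← Polynomial.coe_aeval_eq_eval] using this
    have hsupp : Function.support (fun x : ℝ => aeval x P * Real.exp (-x ^ 2))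
        = {x : ℝ | aeval x P = 0}ᶜ := by
      ext x
      simp [Function.mem_support, Real.exp_ne_zero]
    rw [hsupp, pos_iff_ne_zero]
    intro h0
    have : (volume : Measure ℝ) Set.univ ≤ 0 := by
      have := measure_union_le (μ := (volume : Measure ℝ))
        {x : ℝ | aeval x P = 0} {x : ℝ | aeval x P = 0}ᶜ
      rw [Set.union_compl_self, hfin.measure_zero, h0] at this
      simp at this
    rw [Real.volume_univ] at this
    exact (by simp at this : False)
  rw [hre]
  exact_mod_cast hpos.ne'


/-- Let `g(x) = H_n(x)² e^{−x²}` with `H_n` the probabilists'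
Hermite polynomial. Then the zero set of `𝓕g` has no accumulation point in
`ℝ`; in particular all zeros of `𝓕g` are isolated and the zero set has
Lebesgue measure zero. -/
theorem hermite_squared_fourier_zeros_isolated
    (n : ℕ) (g : ℝ → ℂ)
    (hg : ∀ x : ℝ,
      g x = (((aeval x (hermite n) : ℝ) ^ 2 * Real.exp (-x ^ 2) : ℝ) : ℂ)) :
    (∀ ξ : ℝ, ¬ AccPt ξ (Filter.principal {ξ' : ℝ | 𝓕 g ξ' = 0})) ∧
    volume {ξ : ℝ | 𝓕 g ξ = 0} = 0 := by
  set P : Polynomial ℝ := (hermite n ^ 2).map (algebraMap ℤ ℝ) with hP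
  have hgP : ∀ x : ℝ, g x = ((aeval x P * Real.exp (-x ^ 2) : ℝ) : ℂ) := by
    intro x
    rw [hg x, hP, aeval_map_algebraMap, map_pow]
  have hFour : ∀ w : ℝ, 𝓕 g w = gaussFT P w := by
    intro w
    rw [Real.fourier_real_eq_integral_exp_smul, gaussFT]
    congr 1
    funext v
    rw [hgP v, smul_eq_mul]
    congr 2
    push_cast
    ring
  -- the isolated-zeros part
  have main : ∀ ξ : ℝ, ¬ AccPt ξ (Filter.principal {ξ' : ℝ | 𝓕 g ξ' = 0}) := by
    intro ξ hacc
    rw [accPt_iff_frequently] at hacc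
    have hfreqR : ∃ᶠ y in nhdsWithin ξ ({ξ}ᶜ : Set ℝ), gaussFT P (Complex.ofReal y) = 0 := by
      rw [frequently_nhdsWithin_iff]
      refine hacc.mono ?_
      rintro y ⟨hy1, hy2⟩
      exact ⟨by rw [← hFour]; exact hy2, by simpa using hy1⟩
    have htend : Filter.Tendsto (fun x : ℝ => (x : ℂ))
        (nhdsWithin ξ ({ξ}ᶜ : Set ℝ)) (nhdsWithin (ξ : ℂ) ({(ξ : ℂ)}ᶜ : Set ℂ)) := by
      rw [tendsto_nhdsWithin_iff]
      constructor
      · exact (Complex.continuous_ofReal.tendsto ξ).mono_left nhdsWithin_le_nhds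
      · filter_upwards [eventually_mem_nhdsWithin] with y hy
        simpa [Complex.ofReal_inj] using hy
    have hfreqC : ∃ᶠ z in nhdsWithin (ξ : ℂ) ({(ξ : ℂ)}ᶜ : Set ℂ), gaussFT P z = 0 :=
      htend.frequently hfreqR
    have hzero := (gaussFT_analytic P).eqOn_zero_of_preconnected_of_frequently_eq_zero
      isPreconnected_univ (Set.mem_univ (ξ : ℂ)) hfreqC
    have h0 : gaussFT P 0 = 0 := hzero (Set.mem_univ (0 : ℂ))
    rw [hP] at h0
    exact gaussFT_zero_ne n h0
  refine ⟨main, ?_⟩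
  -- measure-zero part
  set S : Set ℝ := {ξ : ℝ | 𝓕 g ξ = 0} with hS
  have hfin : ∀ N : ℕ, (S ∩ Set.Icc (-(N : ℝ)) N).Finite := by
    intro N
    by_contra hinf
    have hinf' : (S ∩ Set.Icc (-(N : ℝ)) N).Infinite := hinf
    obtain ⟨x, -, hx⟩ := hinf'.exists_accPt_of_subset_isCompact isCompact_Icc
      Set.inter_subset_right
    exact main x (hx.mono (Filter.principal_mono.2 Set.inter_subset_left))
  have hsub : S ⊆ ⋃ N : ℕ, S ∩ Set.Icc (-(N : ℝ)) N := by
    intro x hx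
    refine Set.mem_iUnion.2 ⟨⌈|x|⌉₊, hx, ?_⟩
    have h1 : |x| ≤ (⌈|x|⌉₊ : ℝ) := Nat.le_ceil _
    constructor
    · linarith [neg_abs_le x]
    · linarith [le_abs_self x]
  refine measure_mono_null hsub ?_
  exact Set.Countable.measure_zero
    (Set.countable_iUnion fun N => (hfin N).countable) _
end

section
/- Let B > 0 and let v : ℝ → ℝ be continuously differentiable with v and v′ both bounded. Let φ : ℝ → 𝓢(ℝ), p ↦ φ_p, be a differentiable map into the Schwartz space of real-valued functions, and let ε : ℝ → ℝ be such that for all p, x ∈ ℝ: −φ_p″(x) + (B²x² + v(x − p/B)) φ_p(x) = ε(p) φ_p(x), and ∫_ℝ φ_p(x)² dx = 1 for all p. Then ε is differentiable and for every p ∈ ℝ its derivative is ε′(p) = −(1/B) ∫_ℝ v′(x − p/B) φ_p(x)² dx. -/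
open MeasureTheory SchwartzMap

/-- Differentiability of a curve in the Schwartz space `𝓢(ℝ, ℝ)`: the
difference quotients converge to `φ'` in the Schwartz topology. -/
def HasSchwartzDerivAt (φ : ℝ → SchwartzMap ℝ ℝ) (φ' : SchwartzMap ℝ ℝ)
    (p : ℝ) : Prop :=
  Filter.Tendsto (fun h : ℝ => h⁻¹ • (φ (p + h) - φ p))
    (nhdsWithin (0 : ℝ) {(0 : ℝ)}ᶜ) (nhds φ')

namespace FHaux

/-- sup-norm bound by the (0,0) Schwartz seminorm -/
lemma abs_le_snorm00 (f : SchwartzMap ℝ ℝ) (x : ℝ) :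
    |f x| ≤ SchwartzMap.seminorm ℝ 0 0 f := by
  have := SchwartzMap.le_seminorm' ℝ 0 0 f x
  simpa [iteratedDeriv_zero] using this

lemma coe_deriv (f : SchwartzMap ℝ ℝ) :
    deriv (⇑f) = ⇑(SchwartzMap.derivCLM ℝ ℝ f) :=
  funext fun x => (SchwartzMap.derivCLM_apply ℝ f x).symm

lemma mul_integrable (f g : SchwartzMap ℝ ℝ) :
    Integrable (fun x => f x * g x) := by
  refine g.integrable.bdd_mul (c := SchwartzMap.seminorm ℝ 0 0 f) f.continuous.aestronglyMeasurable ?_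
  exact Filter.Eventually.of_forall fun x => by simpa [Real.norm_eq_abs] using abs_le_snorm00 f x

lemma bdd_mul_integrable {w : ℝ → ℝ} (hw : Continuous w) {C : ℝ}
    (hC : ∀ x, |w x| ≤ C) (g : SchwartzMap ℝ ℝ) :
    Integrable (fun x => w x * g x) :=
  g.integrable.bdd_mul (c := C) hw.aestronglyMeasurable (Filter.Eventually.of_forall fun x => by simpa [Real.norm_eq_abs] using hC x)

/-- integration by parts for Schwartz functions -/
lemma ibp (f g : SchwartzMap ℝ ℝ) :
    ∫ x : ℝ, f x * deriv (⇑g) x = - ∫ x : ℝ, deriv (⇑f) x * g x := by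
  rw [coe_deriv f, coe_deriv g]
  exact integral_mul_deriv_eq_deriv_mul_of_integrable
    (fun x _ => f.differentiableAt.hasDerivAt)
    (fun x _ => g.differentiableAt.hasDerivAt)
    (mul_integrable f (SchwartzMap.derivCLM ℝ ℝ g))
    (mul_integrable (SchwartzMap.derivCLM ℝ ℝ f) g)
    (mul_integrable f g)

/-- symmetry of the second derivative under the L² pairing -/
lemma symm2 (f g : SchwartzMap ℝ ℝ) :
    ∫ x : ℝ, deriv (deriv (⇑f)) x * g x = ∫ x : ℝ, f x * deriv (deriv (⇑g)) x := by
  set f1 := SchwartzMap.derivCLM ℝ ℝ f with hf1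
  set f2 := SchwartzMap.derivCLM ℝ ℝ f1 with hf2
  set g1 := SchwartzMap.derivCLM ℝ ℝ g with hg1
  set g2 := SchwartzMap.derivCLM ℝ ℝ g1 with hg2
  have hf : deriv (deriv (⇑f)) = ⇑f2 := by rw [coe_deriv f]; exact coe_deriv f1
  have hg : deriv (deriv (⇑g)) = ⇑g2 := by rw [coe_deriv g]; exact coe_deriv g1
  have h1 : ∫ x : ℝ, g x * f2 x = - ∫ x : ℝ, g1 x * f1 x := by
    have := ibp g f1
    rwa [coe_deriv f1, coe_deriv g] at this
  have h2 : ∫ x : ℝ, f x * g2 x = - ∫ x : ℝ, f1 x * g1 x := by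
    have := ibp f g1
    rwa [coe_deriv g1, coe_deriv f] at this
  have e1 : (fun x : ℝ => f2 x * g x) = fun x : ℝ => g x * f2 x := by
    funext x; ring
  have e2 : (fun x : ℝ => g1 x * f1 x) = fun x : ℝ => f1 x * g1 x := by
    funext x; ring
  rw [hf, hg, e1, h1, e2, ← h2]

lemma sq_decay_bound (f : SchwartzMap ℝ ℝ) (x : ℝ) :
    |x ^ 2 * f x| ≤ SchwartzMap.seminorm ℝ 2 0 f := by
  have := SchwartzMap.le_seminorm' ℝ 2 0 f x
  simp only [iteratedDeriv_zero] at this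
  calc |x ^ 2 * f x| = |x| ^ 2 * |f x| := by
        rw [abs_mul, abs_pow]
    _ ≤ _ := by simpa [Real.norm_eq_abs] using this

lemma pot_mul_integrable (B : ℝ) (v : ℝ → ℝ) (hvc : Continuous v) (Cv : ℝ)
    (hvb : ∀ x, |v x| ≤ Cv) (a : ℝ) (f g : SchwartzMap ℝ ℝ) :
    Integrable (fun x : ℝ => (B ^ 2 * x ^ 2 + v (x - a)) * (f x * g x)) := by
  have hcont : Continuous fun x : ℝ => (B ^ 2 * x ^ 2 + v (x - a)) * f x :=
    (continuous_const.mul (continuous_pow 2) |>.add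
      (hvc.comp (continuous_id.sub continuous_const))).mul f.continuous
  have hbdd : ∀ x : ℝ, |(B ^ 2 * x ^ 2 + v (x - a)) * f x|
      ≤ B ^ 2 * SchwartzMap.seminorm ℝ 2 0 f + Cv * SchwartzMap.seminorm ℝ 0 0 f := by
    intro x
    have h1 := sq_decay_bound f x
    have h2 := abs_le_snorm00 f x
    have h3 := hvb (x - a)
    have h4 : |v (x - a) * f x| ≤ Cv * SchwartzMap.seminorm ℝ 0 0 f := by
      rw [abs_mul]
      exact mul_le_mul h3 h2 (abs_nonneg _) ((abs_nonneg _).trans h3)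
    have h5 : |B ^ 2 * (x ^ 2 * f x)| ≤ B ^ 2 * SchwartzMap.seminorm ℝ 2 0 f := by
      rw [abs_mul, abs_of_nonneg (sq_nonneg B)]
      exact mul_le_mul_of_nonneg_left h1 (sq_nonneg B)
    calc |(B ^ 2 * x ^ 2 + v (x - a)) * f x|
        = |B ^ 2 * (x ^ 2 * f x) + v (x - a) * f x| := by ring_nf
      _ ≤ |B ^ 2 * (x ^ 2 * f x)| + |v (x - a) * f x| := abs_add_le _ _
      _ ≤ _ := add_le_add h5 h4
  have := bdd_mul_integrable hcont hbdd g
  exact this.congr (Filter.Eventually.of_forall fun x => by ring)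

lemma dd_mul_integrable (f g : SchwartzMap ℝ ℝ) :
    Integrable (fun x : ℝ => deriv (deriv (⇑f)) x * g x) := by
  have : deriv (deriv (⇑f)) = ⇑(SchwartzMap.derivCLM ℝ ℝ (SchwartzMap.derivCLM ℝ ℝ f)) := by
    rw [coe_deriv f]; exact coe_deriv _
  rw [this]
  exact mul_integrable _ _

lemma key_identity (B : ℝ) (v : ℝ → ℝ) (hvc : Continuous v) (Cv : ℝ)
    (hvb : ∀ x, |v x| ≤ Cv)
    (φq φp : SchwartzMap ℝ ℝ) (eq_ ep aq ap : ℝ)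
    (heigq : ∀ x : ℝ, -(deriv (deriv (⇑φq)) x) + (B ^ 2 * x ^ 2 + v (x - aq)) * φq x = eq_ * φq x)
    (heigp : ∀ x : ℝ, -(deriv (deriv (⇑φp)) x) + (B ^ 2 * x ^ 2 + v (x - ap)) * φp x = ep * φp x) :
    (eq_ - ep) * (∫ x : ℝ, φq x * φp x)
      = ∫ x : ℝ, (v (x - aq) - v (x - ap)) * (φq x * φp x) := by
  have iq := pot_mul_integrable B v hvc Cv hvb aq φq φp
  have ip' : Integrable (fun x : ℝ => (B ^ 2 * x ^ 2 + v (x - ap)) * (φq x * φp x)) := by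
    have := pot_mul_integrable B v hvc Cv hvb ap φp φq
    exact this.congr (Filter.Eventually.of_forall fun x => by ring)
  have iddq := dd_mul_integrable φq φp
  have iddp : Integrable (fun x : ℝ => φq x * deriv (deriv (⇑φp)) x) := by
    have := dd_mul_integrable φp φq
    exact this.congr (Filter.Eventually.of_forall fun x => by ring)
  have Hq : eq_ * (∫ x : ℝ, φq x * φp x)
      = (- ∫ x : ℝ, deriv (deriv (⇑φq)) x * φp x)
        + ∫ x : ℝ, (B ^ 2 * x ^ 2 + v (x - aq)) * (φq x * φp x) := by
    calc eq_ * (∫ x : ℝ, φq x * φp x) = ∫ x : ℝ, eq_ * (φq x * φp x) :=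
          (integral_const_mul _ _).symm
      _ = ∫ x : ℝ, (-(deriv (deriv (⇑φq)) x * φp x)
            + (B ^ 2 * x ^ 2 + v (x - aq)) * (φq x * φp x)) :=
          integral_congr_ae (Filter.Eventually.of_forall fun x => by
            linear_combination (φp x) * (heigq x).symm)
      _ = (∫ x : ℝ, -(deriv (deriv (⇑φq)) x * φp x))
            + ∫ x : ℝ, (B ^ 2 * x ^ 2 + v (x - aq)) * (φq x * φp x) :=
          integral_add iddq.neg iq
      _ = (- ∫ x : ℝ, deriv (deriv (⇑φq)) x * φp x)
            + ∫ x : ℝ, (B ^ 2 * x ^ 2 + v (x - aq)) * (φq x * φp x) := by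
          rw [integral_neg]
  have Hp : ep * (∫ x : ℝ, φq x * φp x)
      = (- ∫ x : ℝ, φq x * deriv (deriv (⇑φp)) x)
        + ∫ x : ℝ, (B ^ 2 * x ^ 2 + v (x - ap)) * (φq x * φp x) := by
    calc ep * (∫ x : ℝ, φq x * φp x) = ∫ x : ℝ, ep * (φq x * φp x) :=
          (integral_const_mul _ _).symm
      _ = ∫ x : ℝ, (-(φq x * deriv (deriv (⇑φp)) x)
            + (B ^ 2 * x ^ 2 + v (x - ap)) * (φq x * φp x)) :=
          integral_congr_ae (Filter.Eventually.of_forall fun x => by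
            linear_combination (φq x) * (heigp x).symm)
      _ = (∫ x : ℝ, -(φq x * deriv (deriv (⇑φp)) x))
            + ∫ x : ℝ, (B ^ 2 * x ^ 2 + v (x - ap)) * (φq x * φp x) :=
          integral_add iddp.neg ip'
      _ = (- ∫ x : ℝ, φq x * deriv (deriv (⇑φp)) x)
            + ∫ x : ℝ, (B ^ 2 * x ^ 2 + v (x - ap)) * (φq x * φp x) := by
          rw [integral_neg]
  have hsymm := symm2 φq φp
  have hsub : (∫ x : ℝ, (B ^ 2 * x ^ 2 + v (x - aq)) * (φq x * φp x))
      - ∫ x : ℝ, (B ^ 2 * x ^ 2 + v (x - ap)) * (φq x * φp x)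
      = ∫ x : ℝ, (v (x - aq) - v (x - ap)) * (φq x * φp x) := by
    rw [← integral_sub iq ip']
    exact integral_congr_ae (Filter.Eventually.of_forall fun x => by ring)
  have : (eq_ - ep) * (∫ x : ℝ, φq x * φp x)
      = eq_ * (∫ x : ℝ, φq x * φp x) - ep * (∫ x : ℝ, φq x * φp x) := by ring
  rw [this, Hq, Hp, hsymm]
  linarith [hsub]

end FHaux

open Filter FHaux

/-- Feynman–Hellmann formula in the momentum variable: with
`B > 0`, `v ∈ C¹` with `v, v'` bounded, a differentiable family
`p ↦ φ_p ∈ 𝓢(ℝ)` of normalized real eigenfunctions of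
`−d²/dx² + B²x² + v(x − p/B)` with eigenvalue `ε(p)`, the dispersion curve is
differentiable with `ε'(p) = −(1/B) ∫ v'(x − p/B) φ_p(x)² dx`. -/
theorem feynman_hellmann_momentum
    (B : ℝ) (hB : 0 < B)
    (v : ℝ → ℝ) (hv : ContDiff ℝ 1 v)
    (hvb : ∃ C : ℝ, ∀ x, |v x| ≤ C)
    (hv'b : ∃ C : ℝ, ∀ x, |deriv v x| ≤ C)
    (φ : ℝ → SchwartzMap ℝ ℝ)
    (hφdiff : ∀ p : ℝ, ∃ ψ : SchwartzMap ℝ ℝ, HasSchwartzDerivAt φ ψ p)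
    (ε : ℝ → ℝ)
    (heigen : ∀ p x : ℝ,
      -(deriv (deriv (φ p)) x) + (B ^ 2 * x ^ 2 + v (x - p / B)) * φ p x
        = ε p * φ p x)
    (hnorm : ∀ p : ℝ, (∫ x : ℝ, (φ p x) ^ 2) = 1) :
    ∀ p : ℝ,
      HasDerivAt ε (-(1 / B) * ∫ x : ℝ, deriv v (x - p / B) * (φ p x) ^ 2) p := by
  obtain ⟨Cv, hCv⟩ := hvb
  obtain ⟨Cv', hCv'⟩ := hv'b
  have hvc : Continuous v := hv.continuous
  have hvd : Differentiable ℝ v := hv.differentiable one_ne_zero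
  have hCv'0 : 0 ≤ Cv' := (abs_nonneg _).trans (hCv' 0)
  have hlip : ∀ a b : ℝ, |v a - v b| ≤ Cv' * |a - b| := by
    intro a b
    have := Convex.norm_image_sub_le_of_norm_deriv_le (𝕜 := ℝ) (f := v) (s := Set.univ)
      (fun x _ => hvd.differentiableAt)
      (fun x _ => by simpa [Real.norm_eq_abs] using hCv' x)
      convex_univ (Set.mem_univ b) (Set.mem_univ a)
    simpa [Real.norm_eq_abs] using this
  intro p
  -- continuity of q ↦ φ q at p along the punctured filter
  obtain ⟨ψ, hψ⟩ := hφdiff p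
  have hmap : Filter.Tendsto (fun q : ℝ => q - p) (nhdsWithin p {p}ᶜ)
      (nhdsWithin 0 {(0 : ℝ)}ᶜ) := by
    rw [tendsto_nhdsWithin_iff]
    constructor
    · have : Filter.Tendsto (fun q : ℝ => q - p) (nhds p) (nhds (p - p)) :=
        (continuous_id.sub continuous_const).tendsto p
      simpa using this.mono_left nhdsWithin_le_nhds
    · exact eventually_mem_nhdsWithin.mono fun q hq => sub_ne_zero.mpr hq
  have hΔ : Filter.Tendsto (fun h : ℝ => φ (p + h) - φ p) (nhdsWithin 0 {(0 : ℝ)}ᶜ)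
      (nhds 0) := by
    have h1 : Filter.Tendsto (fun h : ℝ => h • (h⁻¹ • (φ (p + h) - φ p)))
        (nhdsWithin 0 {(0 : ℝ)}ᶜ) (nhds ((0 : ℝ) • ψ)) :=
      Filter.Tendsto.smul (tendsto_id.mono_left nhdsWithin_le_nhds) hψ
    rw [zero_smul] at h1
    refine h1.congr' ?_
    filter_upwards [self_mem_nhdsWithin] with h hh
    rw [smul_smul, mul_inv_cancel₀ hh, one_smul]
  have hφcont : Filter.Tendsto (fun q => φ q) (nhdsWithin p {p}ᶜ) (nhds (φ p)) := by
    have h2 := hΔ.comp hmap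
    have h3 : (fun q : ℝ => φ (p + (q - p)) - φ p) = fun q => φ q - φ p := by
      funext q; rw [add_sub_cancel]
    rw [Function.comp_def] at h2
    simp only [h3] at h2
    have h4 := h2.add_const (φ p)
    simpa using h4
  -- seminorm convergence
  have hsem : Filter.Tendsto (fun q => (SchwartzMap.seminorm ℝ 0 0 (φ q - φ p) : ℝ))
      (nhdsWithin p {p}ᶜ) (nhds 0) := by
    have hco : Continuous (SchwartzMap.seminorm ℝ 0 0 : Seminorm ℝ (SchwartzMap ℝ ℝ)) := by
      have := (schwartz_withSeminorms ℝ ℝ ℝ).continuous_seminorm (0, 0)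
      rwa [schwartzSeminormFamily_apply] at this
    have h5 : Filter.Tendsto (fun q => φ q - φ p) (nhdsWithin p {p}ᶜ) (nhds 0) := by
      have := hφcont.sub_const (φ p)
      simpa using this
    have := (hco.tendsto 0).comp h5
    simpa [Function.comp_def] using this
  set c : ℝ → ℝ := fun q => ∫ x : ℝ, φ q x * φ p x with hc_def
  set M : ℝ := ∫ x : ℝ, |φ p x| with hM_def
  -- c tends to 1
  have hc1 : Filter.Tendsto c (nhdsWithin p {p}ᶜ) (nhds 1) := by
    have hcp : (∫ x : ℝ, φ p x * φ p x) = 1 := by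
      rw [← hnorm p]; exact integral_congr_ae (Filter.Eventually.of_forall fun x => by ring)
    have hdiff : ∀ q, c q - 1 = ∫ x : ℝ, (φ q - φ p) x * φ p x := by
      intro q
      rw [← hcp, ← integral_sub (mul_integrable (φ q) (φ p)) (mul_integrable (φ p) (φ p))]
      exact (integral_congr_ae (Filter.Eventually.of_forall fun x => by
        simp [SchwartzMap.sub_apply]; ring)).symm
    have hb : ∀ q, ‖c q - 1‖ ≤ (SchwartzMap.seminorm ℝ 0 0 (φ q - φ p) : ℝ) * M := by
      intro q
      rw [hdiff q]
      calc ‖∫ x : ℝ, (φ q - φ p) x * φ p x‖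
          ≤ ∫ x : ℝ, (SchwartzMap.seminorm ℝ 0 0 (φ q - φ p) : ℝ) * |φ p x| := by
            refine norm_integral_le_of_norm_le (((φ p).integrable.abs).const_mul _) ?_
            refine Filter.Eventually.of_forall fun x => ?_
            rw [Real.norm_eq_abs, abs_mul]
            exact mul_le_mul_of_nonneg_right (abs_le_snorm00 _ x) (abs_nonneg _)
        _ = (SchwartzMap.seminorm ℝ 0 0 (φ q - φ p) : ℝ) * M := integral_const_mul _ _
    have h0 : Filter.Tendsto (fun q => c q - 1) (nhdsWithin p {p}ᶜ) (nhds 0) := by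
      refine squeeze_zero_norm hb ?_
      have := hsem.mul_const M
      simpa using this
    have := h0.add_const 1
    simpa using this
  have hcne : ∀ᶠ q in nhdsWithin p {p}ᶜ, c q ≠ 0 := hc1.eventually_ne one_ne_zero
  -- difference quotient of the potential
  set D : ℝ → ℝ → ℝ := fun q x => (v (x - q / B) - v (x - p / B)) / (q - p) with hD_def
  have hDcont : ∀ q, Continuous fun x => D q x :=
    fun q => ((hvc.comp (continuous_id.sub continuous_const)).sub
      (hvc.comp (continuous_id.sub continuous_const))).div_const _
  have hDbdd : ∀ q, q ≠ p → ∀ x, |D q x| ≤ Cv' / B := by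
    intro q hq x
    have hqp : q - p ≠ 0 := sub_ne_zero.mpr hq
    have h1 : |v (x - q / B) - v (x - p / B)| ≤ Cv' * (|q - p| / B) := by
      have := hlip (x - q / B) (x - p / B)
      have h2 : |(x - q / B) - (x - p / B)| = |q - p| / B := by
        rw [show (x - q / B) - (x - p / B) = (p - q) / B by ring, abs_div,
          abs_of_pos hB, abs_sub_comm]
      rwa [h2] at this
    rw [hD_def]
    simp only [abs_div]
    rw [div_le_iff₀ (abs_pos.mpr hqp)]
    calc |v (x - q / B) - v (x - p / B)| ≤ Cv' * (|q - p| / B) := h1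
      _ = Cv' / B * |q - p| := by ring
  set N : ℝ → ℝ := fun q => ∫ x : ℝ, D q x * (φ q x * φ p x) with hN_def
  -- the slope equals N q / c q eventually
  have hslope : ∀ᶠ q in nhdsWithin p {p}ᶜ, slope ε p q = N q / c q := by
    filter_upwards [hcne, self_mem_nhdsWithin] with q hcq hqp
    have hqp' : q ≠ p := hqp
    have hkey := key_identity B v hvc Cv hCv (φ q) (φ p) (ε q) (ε p) (q / B) (p / B)
      (fun x => heigen q x) (fun x => heigen p x)
    have hqp0 : q - p ≠ 0 := sub_ne_zero.mpr hqp'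
    have hNq : (q - p) * N q = ∫ x : ℝ, (v (x - q / B) - v (x - p / B)) * (φ q x * φ p x) := by
      rw [hN_def, ← integral_const_mul]
      refine integral_congr_ae (Filter.Eventually.of_forall fun x => ?_)
      rw [hD_def]
      field_simp
    have hkey' : (ε q - ε p) * c q = (q - p) * N q := by
      rw [hNq]; exact hkey
    rw [slope_def_field, div_eq_div_iff hqp0 hcq]
    linarith [hkey']
  -- dominated convergence for the main term
  set T' : ℝ := ∫ x : ℝ, (deriv v (x - p / B) * -(1 / B)) * (φ p x * φ p x) with hT'_def
  have hA : Filter.Tendsto (fun q => ∫ x : ℝ, D q x * (φ p x * φ p x))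
      (nhdsWithin p {p}ᶜ) (nhds T') := by
    rw [hT'_def]
    refine tendsto_integral_filter_of_dominated_convergence
      (fun x => Cv' / B * (φ p x * φ p x)) ?_ ?_ ?_ ?_
    · exact Filter.Eventually.of_forall fun q =>
        ((hDcont q).mul ((φ p).continuous.mul (φ p).continuous)).aestronglyMeasurable
    · filter_upwards [self_mem_nhdsWithin] with q hq
      refine Filter.Eventually.of_forall fun x => ?_
      rw [Real.norm_eq_abs, abs_mul]
      have h6 : |φ p x * φ p x| = φ p x * φ p x := abs_of_nonneg (mul_self_nonneg _)
      rw [h6]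
      exact mul_le_mul_of_nonneg_right (hDbdd q hq x) (mul_self_nonneg _)
    · exact (mul_integrable (φ p) (φ p)).const_mul _
    · refine Filter.Eventually.of_forall fun x => ?_
      have hi : HasDerivAt (fun q : ℝ => x - q / B) (-(1 / B)) p := by
        simpa using ((hasDerivAt_id p).div_const B).const_sub x
      have hg : HasDerivAt (fun q : ℝ => v (x - q / B))
          (deriv v (x - p / B) * -(1 / B)) p := by
        have := (hvd.differentiableAt.hasDerivAt (x := x - p / B)).comp p hi
        simpa [Function.comp_def] using this
      have := (hasDerivAt_iff_tendsto_slope.mp hg).mul_const (φ p x * φ p x)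
      refine this.congr fun q => ?_
      rw [slope_def_field]
  -- error term tends to zero
  have hE : Filter.Tendsto (fun q => ∫ x : ℝ, D q x * ((φ q - φ p) x * φ p x))
      (nhdsWithin p {p}ᶜ) (nhds 0) := by
    refine squeeze_zero_norm'
      (a := fun q => Cv' / B * (SchwartzMap.seminorm ℝ 0 0 (φ q - φ p) : ℝ) * M) ?_ ?_
    · filter_upwards [self_mem_nhdsWithin] with q hq
      calc ‖∫ x : ℝ, D q x * ((φ q - φ p) x * φ p x)‖
          ≤ ∫ x : ℝ, (Cv' / B * (SchwartzMap.seminorm ℝ 0 0 (φ q - φ p) : ℝ)) * |φ p x| := by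
            refine norm_integral_le_of_norm_le (((φ p).integrable.abs).const_mul _) ?_
            refine Filter.Eventually.of_forall fun x => ?_
            rw [Real.norm_eq_abs, abs_mul, abs_mul]
            have b1 := hDbdd q hq x
            have b2 := abs_le_snorm00 (φ q - φ p) x
            have hnn : (0:ℝ) ≤ Cv' / B := div_nonneg hCv'0 hB.le
            calc |D q x| * (|(φ q - φ p) x| * |φ p x|)
                ≤ (Cv' / B) * (|(φ q - φ p) x| * |φ p x|) :=
                  mul_le_mul_of_nonneg_right b1
                    (mul_nonneg (abs_nonneg _) (abs_nonneg _))
              _ ≤ (Cv' / B) * ((SchwartzMap.seminorm ℝ 0 0 (φ q - φ p) : ℝ) * |φ p x|) := by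
                  refine mul_le_mul_of_nonneg_left ?_ hnn
                  exact mul_le_mul_of_nonneg_right b2 (abs_nonneg _)
              _ = (Cv' / B * (SchwartzMap.seminorm ℝ 0 0 (φ q - φ p) : ℝ)) * |φ p x| := by
                  ring
        _ = Cv' / B * (SchwartzMap.seminorm ℝ 0 0 (φ q - φ p) : ℝ) * M :=
            integral_const_mul _ _
    · have := (hsem.const_mul (Cv' / B)).mul_const M
      simpa using this
  -- N tends to T'
  have hN : Filter.Tendsto N (nhdsWithin p {p}ᶜ) (nhds T') := by
    have hsplit : ∀ᶠ q in nhdsWithin p {p}ᶜ,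
        (∫ x : ℝ, D q x * (φ p x * φ p x)) + (∫ x : ℝ, D q x * ((φ q - φ p) x * φ p x))
          = N q := by
      filter_upwards [self_mem_nhdsWithin] with q hq
      have hDb : ∃ C, ∀ x, ‖D q x‖ ≤ C :=
        ⟨Cv' / B, fun x => by simpa [Real.norm_eq_abs] using hDbdd q hq x⟩
      have i1 : Integrable (fun x : ℝ => D q x * (φ p x * φ p x)) :=
        (mul_integrable (φ p) (φ p)).bdd_mul (hDcont q).aestronglyMeasurable (Filter.Eventually.of_forall hDb.choose_spec)
      have i2 : Integrable (fun x : ℝ => D q x * ((φ q - φ p) x * φ p x)) :=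
        (mul_integrable (φ q - φ p) (φ p)).bdd_mul (hDcont q).aestronglyMeasurable (Filter.Eventually.of_forall hDb.choose_spec)
      rw [hN_def, ← integral_add i1 i2]
      refine integral_congr_ae (Filter.Eventually.of_forall fun x => ?_)
      simp only [SchwartzMap.sub_apply]
      ring
    have := (hA.add hE).congr' hsplit
    simpa using this
  -- conclusion
  have hfinal : Filter.Tendsto (fun q => N q / c q) (nhdsWithin p {p}ᶜ) (nhds T') := by
    have := hN.div hc1 one_ne_zero
    simpa [Pi.div_def] using this
  have hT : T' = -(1 / B) * ∫ x : ℝ, deriv v (x - p / B) * (φ p x) ^ 2 := by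
    rw [hT'_def, ← integral_const_mul]
    refine integral_congr_ae (Filter.Eventually.of_forall fun x => ?_)
    ring
  rw [hasDerivAt_iff_tendsto_slope, ← hT]
  exact hfinal.congr' (hslope.mono fun q h => h.symm)
end
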